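/- Let D : ℝ^{d×N} → ℝ^{d×N} be C¹ with symmetric derivative tensor A, uniformly h-monotone, and satisfying D(T)·T ≥ C₁|T| − C₀ and |D(T)| ≤ C₂ for all T (with C₁, C₂ > 0, C₀ ≥ 0), and let F(T) := ∫₀¹ D(tT)·T dt. Then for every T ∈ ℝ^{d×N} the recession limit F_∞(T) := lim_{n→∞} F(nT)/n exists and is finite; the function F_∞ is convex, positively 1-homogeneous (F_∞(λT) = λ F_∞(T) for all λ ≥ 0 and all T), and satisfies F_∞(T) ≥ C₁ |T| for all T; in particular F_∞ is strictly positive on ℝ^{d×N} \\ {0}. -/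

import Mathlib

open MeasureTheory Filter Topology Set

noncomputable section

/-- The space of real `d × N` matrices with the Frobenius (Euclidean) inner product. -/
abbrev Mat (d N : ℕ) := EuclideanSpace ℝ (Fin d × Fin N)

/-- The potential `F(T) := ∫₀¹ D(tT)·T dt` of a mapping `D : ℝ^{d×N} → ℝ^{d×N}`. -/
noncomputable def pot (d N : ℕ) (D : Mat d N → Mat d N) (T : Mat d N) : ℝ :=
  ∫ t in (0 : ℝ)..1, (inner ℝ (D (t • T)) T : ℝ)

/-- Under the standing assumptions on `D`, the recession function
`F_∞(T) := lim_{n→∞} F(nT)/n` of the potential `F` exists and is finite everywhere, is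
convex, positively `1`-homogeneous, and satisfies `F_∞(T) ≥ C₁|T|`; in particular `F_∞`
is strictly positive away from `0`. -/
theorem recession_function_exists (d N : ℕ) (hd : 1 ≤ d) (hN : 1 ≤ N)
    (D : Mat d N → Mat d N) (hD : ContDiff ℝ 1 D)
    (hsymm : ∀ T B C : Mat d N,
      (inner ℝ (fderiv ℝ D T B) C : ℝ) = (inner ℝ (fderiv ℝ D T C) B : ℝ))
    (h : ℝ → ℝ)
    (hpos : ∀ s : ℝ, 0 ≤ s → 0 < h s)
    (hanti : AntitoneOn h (Set.Ici 0))
    (hcont : ContinuousOn h (Set.Ici 0))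
    (hmon : ∀ T B : Mat d N, h ‖T‖ * ‖B‖ ^ 2 ≤ (inner ℝ (fderiv ℝ D T B) B : ℝ))
    (C₀ C₁ C₂ : ℝ) (hC₀ : 0 ≤ C₀) (hC₁ : 0 < C₁) (hC₂ : 0 < C₂)
    (hcoer : ∀ T : Mat d N, C₁ * ‖T‖ - C₀ ≤ (inner ℝ (D T) T : ℝ))
    (hbdd : ∀ T : Mat d N, ‖D T‖ ≤ C₂) :
    ∃ Finf : Mat d N → ℝ,
      (∀ T : Mat d N, Filter.Tendsto
        (fun n : ℕ => pot d N D ((n : ℝ) • T) / (n : ℝ)) Filter.atTop (nhds (Finf T))) ∧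
      ConvexOn ℝ Set.univ Finf ∧
      (∀ l : ℝ, 0 ≤ l → ∀ T : Mat d N, Finf (l • T) = l * Finf T) ∧
      (∀ T : Mat d N, C₁ * ‖T‖ ≤ Finf T) ∧
      (∀ T : Mat d N, T ≠ 0 → 0 < Finf T) := by
  classical
  have hDdiff : Differentiable ℝ D := hD.differentiable one_ne_zero
  have hDcont : Continuous D := hDdiff.continuous
  -- the scalar function along rays
  set g : Mat d N → ℝ → ℝ := fun T s => (inner ℝ (D (s • T)) T : ℝ) with hgdef
  have hgcont : ∀ T, Continuous (g T) := fun T =>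
    (hDcont.comp (continuous_id.smul continuous_const)).inner continuous_const
  -- monotonicity of D
  have mono : ∀ X Y : Mat d N, (inner ℝ (D Y) (X - Y) : ℝ) ≤ (inner ℝ (D X) (X - Y) : ℝ) := by
    intro X Y
    set V := X - Y with hV
    have hline : ∀ t : ℝ, HasDerivAt (fun t : ℝ => (inner ℝ (D (Y + t • V)) V : ℝ))
        ((inner ℝ ((fderiv ℝ D (Y + t • V)) V) V : ℝ)) t := by
      intro t
      have h1 : HasDerivAt (fun t : ℝ => Y + t • V) V t := by
        simpa using ((hasDerivAt_id t).smul_const V).const_add Y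
      have h2 := (hDdiff (Y + t • V)).hasFDerivAt.comp_hasDerivAt t h1
      have h3 := h2.inner ℝ (hasDerivAt_const t V)
      simpa using h3
    have hmono : Monotone (fun t : ℝ => (inner ℝ (D (Y + t • V)) V : ℝ)) := by
      apply monotone_of_deriv_nonneg
      · exact fun t => (hline t).differentiableAt
      · intro t
        rw [(hline t).deriv]
        have h1 := hmon (Y + t • V) V
        have h2 : 0 ≤ h ‖Y + t • V‖ * ‖V‖ ^ 2 :=
          mul_nonneg (hpos _ (norm_nonneg _)).le (sq_nonneg _)
        linarith
    have h01 := hmono (zero_le_one (α := ℝ))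
    simpa [hV] using h01
  -- monotonicity of g T
  have gmono : ∀ T : Mat d N, Monotone (g T) := by
    intro T s r hsr
    rcases eq_or_lt_of_le hsr with hsr' | hsr'
    · rw [hsr']
    · have hm := mono (r • T) (s • T)
      rw [show r • T - s • T = (r - s) • T by rw [sub_smul],
        real_inner_smul_right, real_inner_smul_right] at hm
      have := le_of_mul_le_mul_left hm (by linarith : (0:ℝ) < r - s)
      exact this
  -- bounds
  have gbdd : ∀ (T : Mat d N) (s : ℝ), |g T s| ≤ C₂ * ‖T‖ := by
    intro T s
    calc |g T s| ≤ ‖D (s • T)‖ * ‖T‖ := abs_real_inner_le_norm _ _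
      _ ≤ C₂ * ‖T‖ := mul_le_mul_of_nonneg_right (hbdd _) (norm_nonneg _)
  have bddR : ∀ T : Mat d N, BddAbove (Set.range (g T)) := by
    intro T
    refine ⟨C₂ * ‖T‖, ?_⟩
    rintro x ⟨s, rfl⟩
    exact (le_abs_self _).trans (gbdd T s)
  have bddN : ∀ T : Mat d N, BddAbove (Set.range fun n : ℕ => g T n) := by
    intro T
    refine ⟨C₂ * ‖T‖, ?_⟩
    rintro x ⟨n, rfl⟩
    exact (le_abs_self _).trans (gbdd T n)
  -- the recession function
  set Finf : Mat d N → ℝ := fun T => ⨆ n : ℕ, g T n with hFdef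
  have tendstoNat : ∀ T : Mat d N,
      Tendsto (fun n : ℕ => g T n) atTop (nhds (Finf T)) := fun T =>
    tendsto_atTop_ciSup ((gmono T).comp Nat.mono_cast) (bddN T)
  have tendstoR : ∀ T : Mat d N, Tendsto (g T) atTop (nhds (Finf T)) := by
    intro T
    have h1 := tendsto_atTop_ciSup (gmono T) (bddR T)
    have h2 : Tendsto (fun n : ℕ => g T n) atTop (nhds (⨆ s : ℝ, g T s)) :=
      h1.comp tendsto_natCast_atTop_atTop
    have heq := tendsto_nhds_unique h2 (tendstoNat T)
    rwa [heq] at h1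
  have gle : ∀ (T : Mat d N) (s : ℝ), g T s ≤ Finf T := by
    intro T s
    exact ge_of_tendsto (tendstoR T)
      (eventually_atTop.2 ⟨s, fun r hr => gmono T hr⟩)
  -- key inequality : ⟨D W, T⟩ ≤ Finf T
  have key : ∀ W T : Mat d N, (inner ℝ (D W) T : ℝ) ≤ Finf T := by
    intro W T
    have hn : ∀ n : ℕ, 1 ≤ n → (inner ℝ (D W) T : ℝ) - 2 * C₂ * ‖W‖ / n ≤ g T n := by
      intro n hn1
      have hn0 : (0:ℝ) < n := by exact_mod_cast hn1
      have hm := mono ((n : ℝ) • T) W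
      rw [inner_sub_right, inner_sub_right, real_inner_smul_right,
        real_inner_smul_right] at hm
      have b1 : |(inner ℝ (D W) W : ℝ)| ≤ C₂ * ‖W‖ := by
        calc |(inner ℝ (D W) W : ℝ)| ≤ ‖D W‖ * ‖W‖ := abs_real_inner_le_norm _ _
          _ ≤ C₂ * ‖W‖ := mul_le_mul_of_nonneg_right (hbdd _) (norm_nonneg _)
      have b2 : |(inner ℝ (D ((n:ℝ) • T)) W : ℝ)| ≤ C₂ * ‖W‖ := by
        calc |(inner ℝ (D ((n:ℝ) • T)) W : ℝ)| ≤ ‖D ((n:ℝ) • T)‖ * ‖W‖ :=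
            abs_real_inner_le_norm _ _
          _ ≤ C₂ * ‖W‖ := mul_le_mul_of_nonneg_right (hbdd _) (norm_nonneg _)
      rw [abs_le] at b1 b2
      have hgTn : g T n = (inner ℝ (D ((n:ℝ) • T)) T : ℝ) := rfl
      have h2 : (inner ℝ (D W) T : ℝ) - g T n ≤ 2 * C₂ * ‖W‖ / n := by
        rw [le_div_iff₀ hn0]
        nlinarith [hm, b1.1, b1.2, b2.1, b2.2, hgTn]
      linarith
    have hlim : Tendsto (fun n : ℕ => (inner ℝ (D W) T : ℝ) - 2 * C₂ * ‖W‖ / n)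
        atTop (nhds (inner ℝ (D W) T : ℝ)) := by
      simpa using tendsto_const_nhds.sub (tendsto_const_div_atTop_nhds_zero_nat (2 * C₂ * ‖W‖))
    exact le_of_tendsto hlim
      (eventually_atTop.2 ⟨1, fun n h1 => (hn n h1).trans (gle T n)⟩)
  -- lower bound
  have lowerB : ∀ T : Mat d N, C₁ * ‖T‖ ≤ Finf T := by
    intro T
    have hn : ∀ n : ℕ, 1 ≤ n → C₁ * ‖T‖ - C₀ / n ≤ g T n := by
      intro n hn1
      have hn0 : (0:ℝ) < n := by exact_mod_cast hn1
      have hc := hcoer ((n : ℝ) • T)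
      rw [real_inner_smul_right, norm_smul] at hc
      have habs : ‖(n:ℝ)‖ = (n:ℝ) := by
        rw [Real.norm_eq_abs, abs_of_pos hn0]
      rw [habs] at hc
      have hgTn : g T n = (inner ℝ (D ((n:ℝ) • T)) T : ℝ) := rfl
      have h2 : C₁ * ‖T‖ - g T n ≤ C₀ / n := by
        rw [le_div_iff₀ hn0]
        nlinarith [hc, hgTn]
      linarith
    have hlim : Tendsto (fun n : ℕ => C₁ * ‖T‖ - C₀ / n) atTop (nhds (C₁ * ‖T‖)) := by
      simpa using tendsto_const_nhds.sub (tendsto_const_div_atTop_nhds_zero_nat C₀)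
    exact le_of_tendsto hlim
      (eventually_atTop.2 ⟨1, fun n h1 => (hn n h1).trans (gle T n)⟩)
  -- homogeneity
  have hom : ∀ l : ℝ, 0 ≤ l → ∀ T : Mat d N, Finf (l • T) = l * Finf T := by
    intro l hl T
    rcases eq_or_lt_of_le hl with hl0 | hl0
    · subst hl0
      have : ∀ n : ℕ, g ((0:ℝ) • T) n = 0 := by
        intro n; simp [hgdef]
      simp only [hFdef]
      rw [show (fun n : ℕ => g ((0:ℝ) • T) n) = fun _ : ℕ => (0:ℝ) from funext this]
      simp
    · have hgs : ∀ s : ℝ, g (l • T) s = l * g T (s * l) := by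
        intro s
        simp only [hgdef]
        rw [smul_smul, real_inner_smul_right]
      have h1 : Tendsto (fun n : ℕ => g (l • T) n) atTop (nhds (l * Finf T)) := by
        simp only [hgs]
        have h2 : Tendsto (fun n : ℕ => (n : ℝ) * l) atTop atTop :=
          Tendsto.atTop_mul_const hl0 tendsto_natCast_atTop_atTop
        exact ((tendstoR T).comp h2).const_mul l
      exact tendsto_nhds_unique (tendstoNat (l • T)) h1
  -- subadditivity and convexity
  have subadd : ∀ X Y : Mat d N, Finf (X + Y) ≤ Finf X + Finf Y := by
    intro X Y
    refine ciSup_le fun n => ?_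
    have : g (X + Y) n =
        (inner ℝ (D ((n:ℝ) • (X + Y))) X : ℝ) + (inner ℝ (D ((n:ℝ) • (X + Y))) Y : ℝ) := by
      simp only [hgdef]
      rw [inner_add_right]
    rw [this]
    exact add_le_add (key _ X) (key _ Y)
  have conv : ConvexOn ℝ Set.univ Finf := by
    refine ⟨convex_univ, fun x _ y _ a b ha hb hab => ?_⟩
    calc Finf (a • x + b • y) ≤ Finf (a • x) + Finf (b • y) := subadd _ _
      _ = a * Finf x + b * Finf y := by rw [hom a ha x, hom b hb y]
      _ = a • Finf x + b • Finf y := by simp [smul_eq_mul]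
  -- the main convergence statement
  have main : ∀ T : Mat d N,
      Tendsto (fun n : ℕ => pot d N D ((n : ℝ) • T) / (n : ℝ)) atTop (nhds (Finf T)) := by
    intro T
    have hint : ∀ s : ℝ, ∀ a b : ℝ, IntervalIntegrable (fun t => g T (t * s)) volume a b := by
      intro s a b
      exact ((hgcont T).comp (continuous_id.mul continuous_const)).intervalIntegrable a b
    have hpotn : ∀ n : ℕ, 1 ≤ n →
        pot d N D ((n : ℝ) • T) / (n : ℝ) = ∫ t in (0:ℝ)..1, g T (t * n) := by
      intro n hn1
      have hn0 : (0:ℝ) < n := by exact_mod_cast hn1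
      have hrw : ∀ t : ℝ, (inner ℝ (D (t • ((n:ℝ) • T))) ((n:ℝ) • T) : ℝ)
          = (n : ℝ) * g T (t * n) := by
        intro t
        simp only [hgdef]
        rw [smul_smul, real_inner_smul_right]
      rw [pot]
      simp only [hrw]
      rw [intervalIntegral.integral_const_mul]
      exact mul_div_cancel_left₀ _ (ne_of_gt hn0)
    have hup : ∀ s : ℝ, (∫ t in (0:ℝ)..1, g T (t * s)) ≤ Finf T := by
      intro s
      calc (∫ t in (0:ℝ)..1, g T (t * s)) ≤ ∫ _t in (0:ℝ)..1, Finf T :=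
          intervalIntegral.integral_mono_on zero_le_one (hint s 0 1)
            (intervalIntegrable_const) (fun t _ => gle T _)
        _ = Finf T := by simp
    have core : Tendsto (fun n : ℕ => ∫ t in (0:ℝ)..1, g T (t * n)) atTop (nhds (Finf T)) := by
      rw [tendsto_order]
      constructor
      · intro b hb
        obtain ⟨k, hk⟩ : ∃ k : ℕ, b < g T k := by
          by_contra hcon
          push_neg at hcon
          exact absurd (ciSup_le hcon : Finf T ≤ b) (not_le.2 hb)
        have hlb : Tendsto (fun n : ℕ => g T k + ((k:ℝ)/n) * (g T 0 - g T k))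
            atTop (nhds (g T k)) := by
          have := (tendsto_const_div_atTop_nhds_zero_nat (k:ℝ)).mul_const (g T 0 - g T k)
          simpa using tendsto_const_nhds.add this
        have hev1 := hlb.eventually_const_lt hk
        filter_upwards [hev1, eventually_ge_atTop (max 1 k)] with n hn1 hn2
        have hnk : k ≤ n := le_trans (le_max_right 1 k) hn2
        have hn1' : 1 ≤ n := le_trans (le_max_left 1 k) hn2
        have hn0 : (0:ℝ) < n := by exact_mod_cast hn1'
        have hc0 : (0:ℝ) ≤ (k:ℝ)/n := div_nonneg (Nat.cast_nonneg k) hn0.le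
        have hc1 : (k:ℝ)/n ≤ 1 := by
          rw [div_le_one hn0]; exact_mod_cast hnk
        have hsplit : (∫ t in (0:ℝ)..1, g T (t * n)) =
            (∫ t in (0:ℝ)..((k:ℝ)/n), g T (t * n)) + ∫ t in ((k:ℝ)/n)..1, g T (t * n) :=
          (intervalIntegral.integral_add_adjacent_intervals (hint n 0 _) (hint n _ 1)).symm
        have low1 : ((k:ℝ)/n) * g T 0 ≤ ∫ t in (0:ℝ)..((k:ℝ)/n), g T (t * n) := by
          have := intervalIntegral.integral_mono_on hc0
            (intervalIntegrable_const (c := g T 0)) (hint n 0 _)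
            (fun t ht => gmono T (by nlinarith [ht.1]))
          simpa using this
        have low2 : (1 - (k:ℝ)/n) * g T k ≤ ∫ t in ((k:ℝ)/n)..1, g T (t * n) := by
          have := intervalIntegral.integral_mono_on hc1
            (intervalIntegrable_const (c := g T k)) (hint n _ 1)
            (fun t ht => gmono T (by
              have h1 : (k:ℝ)/n ≤ t := ht.1
              calc (k:ℝ) = ((k:ℝ)/n) * n := by field_simp
                _ ≤ t * n := mul_le_mul_of_nonneg_right h1 hn0.le))
          simpa using this
        have hre : g T k + ((k:ℝ)/n) * (g T 0 - g T k)
            = ((k:ℝ)/n) * g T 0 + (1 - (k:ℝ)/n) * g T k := by ring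
        rw [hre] at hn1
        linarith [low1, low2, hn1]
      · intro b hb
        filter_upwards [eventually_ge_atTop 1] with n hn1
        exact lt_of_le_of_lt (hup n) hb
    apply core.congr'
    filter_upwards [eventually_ge_atTop 1] with n hn1
    exact (hpotn n hn1).symm
  refine ⟨Finf, main, conv, hom, lowerB, fun T hT => ?_⟩
  have : 0 < C₁ * ‖T‖ := mul_pos hC₁ (norm_pos_iff.2 hT)
  exact lt_of_lt_of_le this (lowerB T)
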